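/- Let D = (V(D), E(D), w) be a vertex-weighted oriented cycle such that w(x) ≥ 2 for every vertex x ∈ V(D). Then pd(I(D)) = |E(D)| − 1. -/

import Mathlib

open MvPolynomial

/-- A minimal graded free resolution `⋯ → F₂ → F₁ → F₀ → I → 0` of an ideal `I` of the
polynomial ring `S = MvPolynomial σ k`.  The `i`-th free module
`Fᵢ = ⨁_a S(-deg i a)` is modelled as `Fin (rk i) →₀ S`, where `deg i a` records the
degree shift (internal degree) of the `a`-th basis element of `Fᵢ`. -/
structure MinimalGradedFreeResolution {k : Type*} [Field k] {σ : Type*}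
    (I : Ideal (MvPolynomial σ k)) where
  /-- the rank of the `i`-th free module -/
  rk : ℕ → ℕ
  /-- the degree shifts of the basis elements -/
  deg : (i : ℕ) → Fin (rk i) → ℕ
  /-- the augmentation map `F₀ → S`, whose image is `I` -/
  aug : (Fin (rk 0) →₀ MvPolynomial σ k) →ₗ[MvPolynomial σ k] MvPolynomial σ k
  /-- the differentials of the resolution -/
  d : (i : ℕ) → ((Fin (rk (i + 1)) →₀ MvPolynomial σ k) →ₗ[MvPolynomial σ k]
      (Fin (rk i) →₀ MvPolynomial σ k))
  /-- the image of the augmentation map is `I` -/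
  range_aug : LinearMap.range aug = I
  /-- exactness at homological position `0` -/
  exact_zero : LinearMap.range (d 0) = LinearMap.ker aug
  /-- exactness at homological position `i + 1` -/
  exact_succ : ∀ i, LinearMap.range (d (i + 1)) = LinearMap.ker (d i)
  /-- the augmentation map is graded: the image of the `a`-th basis vector of `F₀`
  is homogeneous of degree `deg 0 a` -/
  aug_graded : ∀ a, (aug (Finsupp.single a 1)).IsHomogeneous (deg 0 a)
  /-- the differentials are graded maps (of degree `0` for the shifted gradings) -/
  d_graded : ∀ i b a, (d i (Finsupp.single b 1)) a = 0 ∨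
      ∃ e, ((d i (Finsupp.single b 1)) a).IsHomogeneous e ∧ deg i a + e = deg (i + 1) b
  /-- minimality: every entry of the matrix of each differential lies in the
  irrelevant maximal ideal `(x_1, …, x_n)` -/
  minimal : ∀ i b a, constantCoeff ((d i (Finsupp.single b 1)) a) = 0

namespace MinimalGradedFreeResolution

variable {k : Type*} [Field k] {σ : Type*} {I : Ideal (MvPolynomial σ k)}

/-- The graded Betti number `β_{i,j}(I)`: the number of basis elements of `Fᵢ`
of (internal) degree `j`. -/
noncomputable def betti (R : MinimalGradedFreeResolution I) (i j : ℕ) : ℕ :=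
  Nat.card {a : Fin (R.rk i) // R.deg i a = j}

/-- The (Castelnuovo–Mumford) regularity `reg I = max { j - i : β_{i,j}(I) ≠ 0 }`. -/
noncomputable def reg (R : MinimalGradedFreeResolution I) : ℤ :=
  sSup {r : ℤ | ∃ i j : ℕ, R.betti i j ≠ 0 ∧ r = (j : ℤ) - (i : ℤ)}

/-- The projective dimension `pd I = max { i : β_{i,j}(I) ≠ 0 for some j }`. -/
noncomputable def pd (R : MinimalGradedFreeResolution I) : ℕ :=
  sSup {i : ℕ | ∃ j, R.betti i j ≠ 0}

end MinimalGradedFreeResolution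

/-- A vertex-weighted oriented graph `D = (V, E, w)`: each ordered pair of distinct
vertices carries at most one edge, having a unique direction, and `w : V → ℕ⁺` is a
weight function. -/
structure VWOrientedGraph (V : Type*) where
  /-- `edge u v` means there is an edge directed from `u` to `v` -/
  edge : V → V → Prop
  loopless : ∀ v, ¬ edge v v
  /-- no pair of vertices is joined in both directions -/
  oriented : ∀ u v, edge u v → ¬ edge v u
  /-- the weight function -/
  w : V → ℕ
  one_le_w : ∀ v, 1 ≤ w v

namespace VWOrientedGraph

variable {V : Type*}

/-- The underlying simple graph of an oriented graph. -/
def underlying (D : VWOrientedGraph V) : SimpleGraph V where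
  Adj u v := D.edge u v ∨ D.edge v u
  symm := ⟨fun _ _ h => h.symm⟩
  loopless := ⟨fun v h => h.elim (D.loopless v) (D.loopless v)⟩

/-- The degree `d(v)` of a vertex `v` in the underlying simple graph. -/
noncomputable def degree (D : VWOrientedGraph V) (v : V) : ℕ :=
  Nat.card {u : V // D.underlying.Adj v u}

/-- The number of edges `|E(D)|`. -/
noncomputable def edgeCount (D : VWOrientedGraph V) : ℕ :=
  Nat.card {p : V × V // D.edge p.1 p.2}

/-- The edge ideal `I(D) = (x_u · x_v^{w(v)} : u v ∈ E(D))` of a vertex-weighted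
oriented graph, in the polynomial ring over `k` with variables the vertices of `D`. -/
noncomputable def edgeIdeal (k : Type*) [Field k] (D : VWOrientedGraph V) :
    Ideal (MvPolynomial V k) :=
  Ideal.span {p | ∃ u v, D.edge u v ∧ p = X u * X v ^ D.w v}

/-- A rooted forest: a disjoint union of rooted trees, i.e. of oriented trees all of
whose edges are oriented away from the root.  Equivalently, the underlying graph is a
forest (acyclic) and every vertex has at most one incoming edge. -/
def IsRootedForest (D : VWOrientedGraph V) : Prop :=
  D.underlying.IsAcyclic ∧ ∀ u u' v, D.edge u v → D.edge u' v → u = u'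

/-- A rooted tree: a connected rooted forest. -/
def IsRootedTree (D : VWOrientedGraph V) : Prop :=
  D.IsRootedForest ∧ D.underlying.Connected

/-- An oriented cycle: an orientation of a cycle `x_1 x_2 ⋯ x_n x_1` (`n ≥ 3`) in which
each vertex dominates its successor. -/
def IsOrientedCycle (D : VWOrientedGraph V) : Prop :=
  ∃ n : ℕ, 3 ≤ n ∧ ∃ c : ZMod n ≃ V,
    ∀ u v, D.edge u v ↔ ∃ i : ZMod n, u = c i ∧ v = c (i + 1)

end VWOrientedGraph



set_option linter.unusedSectionVars false
set_option linter.unusedVariables false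
set_option maxHeartbeats 1000000

namespace PdCycleAux

variable {k : Type*} [Field k] {σ : Type*}

/-- The matrix of a linear map between finite free `MvPolynomial σ k`-modules,
reduced modulo the irrelevant maximal ideal. -/
noncomputable def mat {κ κ' : Type*}
    (L : (κ' →₀ MvPolynomial σ k) →ₗ[MvPolynomial σ k] (κ →₀ MvPolynomial σ k)) :
    Matrix κ κ' k := fun a b => constantCoeff ((L (Finsupp.single b 1)) a)

lemma apply_coord {κ κ' : Type*}
    (L : (κ' →₀ MvPolynomial σ k) →ₗ[MvPolynomial σ k] (κ →₀ MvPolynomial σ k))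
    (y : κ' →₀ MvPolynomial σ k) (a : κ) :
    (L y) a = ∑ b ∈ y.support, y b * (L (Finsupp.single b 1)) a := by
  conv_lhs => rw [← Finsupp.sum_single y]
  rw [Finsupp.sum, map_sum]
  rw [Finsupp.finset_sum_apply]
  refine Finset.sum_congr rfl fun b hb => ?_
  have : Finsupp.single b (y b) = (y b) • Finsupp.single b (1 : MvPolynomial σ k) := by
    rw [Finsupp.smul_single, smul_eq_mul, mul_one]
  rw [this, map_smul, Finsupp.smul_apply, smul_eq_mul]

lemma mat_comp {κ κ' κ'' : Type*} [Fintype κ']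
    (L : (κ' →₀ MvPolynomial σ k) →ₗ[MvPolynomial σ k] (κ →₀ MvPolynomial σ k))
    (L' : (κ'' →₀ MvPolynomial σ k) →ₗ[MvPolynomial σ k] (κ' →₀ MvPolynomial σ k)) :
    mat (L.comp L') = mat L * mat L' := by
  funext a c
  have h1 : (L (L' (Finsupp.single c 1))) a
      = ∑ b ∈ (L' (Finsupp.single c 1)).support,
          (L' (Finsupp.single c 1)) b * (L (Finsupp.single b 1)) a :=
    apply_coord L _ a
  have h2 : ∑ b ∈ (L' (Finsupp.single c 1)).support,
          (L' (Finsupp.single c 1)) b * (L (Finsupp.single b 1)) a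
      = ∑ b : κ', (L' (Finsupp.single c 1)) b * (L (Finsupp.single b 1)) a := by
    refine Finset.sum_subset (Finset.subset_univ _)
      (f := fun b => (L' (Finsupp.single c 1)) b * (L (Finsupp.single b 1)) a) ?_
    intro b _ hb
    beta_reduce
    rw [Finsupp.notMem_support_iff.mp hb, zero_mul]
  simp only [mat, Matrix.mul_apply, LinearMap.comp_apply, h1, h2, map_sum, map_mul]
  exact Finset.sum_congr rfl fun b _ => mul_comm _ _

lemma mat_id {κ : Type*} [DecidableEq κ] :
    mat (LinearMap.id : (κ →₀ MvPolynomial σ k) →ₗ[MvPolynomial σ k] (κ →₀ MvPolynomial σ k))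
      = 1 := by
  funext a b
  by_cases h : a = b
  · subst h; simp [mat, Matrix.one_apply]
  · simp [mat, Matrix.one_apply, h, Finsupp.single_apply, Ne.symm h]

lemma mat_add {κ κ' : Type*}
    (L L' : (κ' →₀ MvPolynomial σ k) →ₗ[MvPolynomial σ k] (κ →₀ MvPolynomial σ k)) :
    mat (L + L') = mat L + mat L' := by
  funext a b
  simp [mat]

/-- Lift a map defined on basis elements along `e`, choosing preimages. -/
noncomputable def liftMap {κ : Type*} {M N : Type*} [AddCommGroup M] [AddCommGroup N]
    [Module (MvPolynomial σ k) M] [Module (MvPolynomial σ k) N]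
    (e : M →ₗ[MvPolynomial σ k] N) (t : κ → N) : (κ →₀ MvPolynomial σ k) →ₗ[MvPolynomial σ k] M :=
  Finsupp.linearCombination (MvPolynomial σ k)
    (fun b =>
      letI := Classical.dec (t b ∈ LinearMap.range e)
      if h : t b ∈ LinearMap.range e then h.choose else 0)

lemma liftMap_spec {κ : Type*} {M N : Type*} [AddCommGroup M] [AddCommGroup N]
    [Module (MvPolynomial σ k) M] [Module (MvPolynomial σ k) N]
    (e : M →ₗ[MvPolynomial σ k] N) (t : κ → N) {b : κ} (hb : t b ∈ LinearMap.range e) :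
    e (liftMap e t (Finsupp.single b 1)) = t b := by
  simp only [liftMap, Finsupp.linearCombination_single, one_smul]
  rw [dif_pos hb]
  exact hb.choose_spec


/-- Minimal free resolution data (ungraded part). -/
structure Res (k : Type*) [Field k] (σ : Type*) (I : Ideal (MvPolynomial σ k)) where
  κ : ℕ → Type
  ft : ∀ i, Fintype (κ i)
  dec : ∀ i, DecidableEq (κ i)
  aug : (κ 0 →₀ MvPolynomial σ k) →ₗ[MvPolynomial σ k] MvPolynomial σ k
  d : ∀ i, (κ (i+1) →₀ MvPolynomial σ k) →ₗ[MvPolynomial σ k] (κ i →₀ MvPolynomial σ k)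
  range_aug : LinearMap.range aug = I
  exact_zero : LinearMap.range (d 0) = LinearMap.ker aug
  exact_succ : ∀ i, LinearMap.range (d (i+1)) = LinearMap.ker (d i)
  minimal : ∀ i b a, constantCoeff ((d i (Finsupp.single b 1)) a) = 0

attribute [instance] Res.ft Res.dec

namespace Res

variable {I : Ideal (MvPolynomial σ k)} (A B : Res k σ I)

lemma aug_comp_d : A.aug.comp (A.d 0) = 0 := by
  apply LinearMap.ext; intro x
  have : A.d 0 x ∈ LinearMap.ker A.aug := by
    rw [← A.exact_zero]; exact LinearMap.mem_range_self _ x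
  simpa using this

lemma d_comp_d (i : ℕ) : (A.d i).comp (A.d (i+1)) = 0 := by
  apply LinearMap.ext; intro x
  have : A.d (i+1) x ∈ LinearMap.ker (A.d i) := by
    rw [← A.exact_succ]; exact LinearMap.mem_range_self _ x
  simpa using this

/-- A chain map between two resolutions of the same ideal, lifting the identity. -/
noncomputable def cm : ∀ i, (A.κ i →₀ MvPolynomial σ k) →ₗ[MvPolynomial σ k]
    (B.κ i →₀ MvPolynomial σ k)
  | 0 => liftMap B.aug (fun b => A.aug (Finsupp.single b 1))
  | (i+1) => liftMap (B.d i) (fun b => cm i (A.d i (Finsupp.single b 1)))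

lemma cm_zero : B.aug.comp (cm A B 0) = A.aug := by
  refine Finsupp.lhom_ext' fun b => LinearMap.ext_ring ?_
  simp only [LinearMap.comp_apply, Finsupp.lsingle_apply]
  refine liftMap_spec _ _ ?_
  have h := LinearMap.mem_range_self A.aug (Finsupp.single b 1)
  rw [A.range_aug] at h
  rw [B.range_aug]
  exact h

lemma cm_succ : ∀ i, (B.d i).comp (cm A B (i+1)) = (cm A B i).comp (A.d i) := by
  intro i
  induction i with
  | zero =>
    refine Finsupp.lhom_ext' fun b => LinearMap.ext_ring ?_
    simp only [LinearMap.comp_apply, Finsupp.lsingle_apply]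
    refine liftMap_spec _ _ ?_
    rw [B.exact_zero, LinearMap.mem_ker, ← LinearMap.comp_apply, cm_zero,
      ← LinearMap.comp_apply, aug_comp_d, LinearMap.zero_apply]
  | succ i ih =>
    refine Finsupp.lhom_ext' fun b => LinearMap.ext_ring ?_
    simp only [LinearMap.comp_apply, Finsupp.lsingle_apply]
    refine liftMap_spec _ _ ?_
    rw [B.exact_succ, LinearMap.mem_ker, ← LinearMap.comp_apply, ih,
      LinearMap.comp_apply, ← LinearMap.comp_apply (A.d i), d_comp_d,
      LinearMap.zero_apply, map_zero]

section homotopy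

variable (φ : ∀ i, (A.κ i →₀ MvPolynomial σ k) →ₗ[MvPolynomial σ k]
    (A.κ i →₀ MvPolynomial σ k))

/-- Null-homotopy of `φ - id` for a chain self-map `φ` lifting the identity. -/
noncomputable def hty : ∀ i, (A.κ i →₀ MvPolynomial σ k) →ₗ[MvPolynomial σ k]
    (A.κ (i+1) →₀ MvPolynomial σ k)
  | 0 => liftMap (A.d 0) (fun b => φ 0 (Finsupp.single b 1) - Finsupp.single b 1)
  | (i+1) => liftMap (A.d (i+1)) (fun b => φ (i+1) (Finsupp.single b 1)
      - Finsupp.single b 1 - hty i (A.d i (Finsupp.single b 1)))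

variable (hφ0 : A.aug.comp (φ 0) = A.aug)
variable (hφ : ∀ i, (A.d i).comp (φ (i+1)) = (φ i).comp (A.d i))

include hφ0 in
lemma hty_zero : (A.d 0).comp (hty A φ 0) = φ 0 - LinearMap.id := by
  refine Finsupp.lhom_ext' fun b => LinearMap.ext_ring ?_
  simp only [LinearMap.comp_apply, Finsupp.lsingle_apply, LinearMap.sub_apply,
    LinearMap.id_apply]
  refine liftMap_spec _ _ ?_
  rw [A.exact_zero, LinearMap.mem_ker, map_sub, ← LinearMap.comp_apply, hφ0, sub_self]

include hφ0 hφ in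
lemma hty_succ : ∀ i, (A.d (i+1)).comp (hty A φ (i+1))
    = φ (i+1) - LinearMap.id - (hty A φ i).comp (A.d i) := by
  intro i
  induction i with
  | zero =>
    refine Finsupp.lhom_ext' fun b => LinearMap.ext_ring ?_
    simp only [LinearMap.comp_apply, Finsupp.lsingle_apply, LinearMap.sub_apply,
      LinearMap.id_apply]
    refine liftMap_spec _ _ ?_
    rw [A.exact_succ, LinearMap.mem_ker, map_sub, map_sub,
      ← LinearMap.comp_apply (A.d 0) (φ 1), hφ 0,
      ← LinearMap.comp_apply (A.d 0) (hty A φ 0), hty_zero A φ hφ0]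
    simp
  | succ i ih =>
    refine Finsupp.lhom_ext' fun b => LinearMap.ext_ring ?_
    simp only [LinearMap.comp_apply, Finsupp.lsingle_apply, LinearMap.sub_apply,
      LinearMap.id_apply]
    refine liftMap_spec _ _ ?_
    rw [A.exact_succ, LinearMap.mem_ker, map_sub, map_sub,
      ← LinearMap.comp_apply (A.d (i+1)) (φ (i+2)), hφ (i+1),
      ← LinearMap.comp_apply (A.d (i+1)) (hty A φ (i+1)), ih]
    simp only [LinearMap.sub_apply, LinearMap.comp_apply, LinearMap.id_apply]
    have : A.d i (A.d (i+1) (Finsupp.single b 1)) = 0 := by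
      rw [← LinearMap.comp_apply, d_comp_d, LinearMap.zero_apply]
    rw [this, map_zero]
    abel

include hφ0 hφ in
lemma mat_phi : ∀ i, mat (φ i) = 1 := by
  intro i
  have matd : ∀ j, mat (A.d j) = 0 := by
    intro j; funext a b; exact A.minimal j b a
  cases i with
  | zero =>
    have h := hty_zero A φ hφ0
    have : φ 0 = LinearMap.id + (A.d 0).comp (hty A φ 0) := by rw [h]; abel
    rw [this, mat_add, mat_id, mat_comp, matd, Matrix.zero_mul, add_zero]
  | succ i =>
    have h := hty_succ A φ hφ0 hφ i
    have : φ (i+1) = LinearMap.id + (A.d (i+1)).comp (hty A φ (i+1))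
        + (hty A φ i).comp (A.d i) := by rw [h]; abel
    rw [this, mat_add, mat_add, mat_id, mat_comp, mat_comp, matd, Matrix.zero_mul,
      matd, Matrix.mul_zero, add_zero, add_zero]

end homotopy

/-- Two minimal free resolutions of the same ideal have equal Betti numbers. -/
theorem card_eq (i : ℕ) : Fintype.card (A.κ i) = Fintype.card (B.κ i) := by
  set f := cm A B with hf
  set g := cm B A with hg
  have hgf : ∀ j, mat ((g j).comp (f j)) = 1 := by
    refine mat_phi A _ ?_ ?_
    · rw [← LinearMap.comp_assoc, cm_zero B A, cm_zero A B]
    · intro j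
      rw [← LinearMap.comp_assoc, cm_succ B A, LinearMap.comp_assoc, cm_succ A B,
        LinearMap.comp_assoc]
  have hfg : ∀ j, mat ((f j).comp (g j)) = 1 := by
    refine mat_phi B _ ?_ ?_
    · rw [← LinearMap.comp_assoc, cm_zero A B, cm_zero B A]
    · intro j
      rw [← LinearMap.comp_assoc, cm_succ A B, LinearMap.comp_assoc, cm_succ B A,
        LinearMap.comp_assoc]
  have h1 : mat (g i) * mat (f i) = 1 := by rw [← mat_comp, hgf i]
  have h2 : mat (f i) * mat (g i) = 1 := by rw [← mat_comp, hfg i]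
  have E : ((A.κ i) → k) ≃ₗ[k] ((B.κ i) → k) := by
    refine LinearEquiv.ofLinear (Matrix.toLin' (mat (f i))) (Matrix.toLin' (mat (g i))) ?_ ?_
    · rw [← Matrix.toLin'_mul, h2, Matrix.toLin'_one]
    · rw [← Matrix.toLin'_mul, h1, Matrix.toLin'_one]
  have := E.finrank_eq
  rwa [Module.finrank_fintype_fun_eq_card, Module.finrank_fintype_fun_eq_card] at this

end Res



section Taylor

variable {k : Type*} [Field k] {V : Type*} {ι : Type} [Fintype ι] [LinearOrder ι]

/-- faces of the Taylor simplex with `i` vertices -/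
abbrev Face (ι : Type) (i : ℕ) := {s : Finset ι // s.card = i}

variable (u : ι → (V →₀ ℕ))

/-- lcm (additively: sup) of the multidegrees indexed by `s` -/
noncomputable def LL (s : Finset ι) : V →₀ ℕ := s.sup u

lemma LL_mono {s t : Finset ι} (h : s ⊆ t) : LL u s ≤ LL u t := Finset.sup_mono h

lemma le_LL {j : ι} {s : Finset ι} (h : j ∈ s) : u j ≤ LL u s := Finset.le_sup h

lemma LL_erase_le {j : ι} {s : Finset ι} : LL u (s.erase j) ≤ LL u s :=
  LL_mono u (Finset.erase_subset _ _)

/-- position of `j` in the ordered enumeration of `s` -/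
def idx (j : ι) (s : Finset ι) : ℕ := (s.filter (· < j)).card

/-- sign `(-1)^idx` -/
def sgn (k : Type*) [Field k] (j : ι) (s : Finset ι) : k := (-1 : k) ^ (idx j s)

/-- `single` with a cardinality guard -/
noncomputable def fsingle (i : ℕ) (t : Finset ι) (p : MvPolynomial V k) :
    Face ι i →₀ MvPolynomial V k :=
  if h : t.card = i then Finsupp.single ⟨t, h⟩ p else 0

lemma fsingle_of_card {i : ℕ} {t : Finset ι} (h : t.card = i) (p : MvPolynomial V k) :
    fsingle i t p = Finsupp.single ⟨t, h⟩ p := dif_pos h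

lemma fsingle_add {i : ℕ} {t : Finset ι} (p q : MvPolynomial V k) :
    fsingle i t (p + q) = fsingle i t p + fsingle i t q := by
  unfold fsingle; split <;> simp

lemma fsingle_smul {i : ℕ} {t : Finset ι} (c : MvPolynomial V k) (p : MvPolynomial V k) :
    fsingle i t (c * p) = c • fsingle i t p := by
  unfold fsingle; split <;> simp [Finsupp.smul_single]

lemma fsingle_smul' {i : ℕ} {t : Finset ι} (c : k) (p : MvPolynomial V k) :
    fsingle i t (c • p) = c • fsingle (V := V) i t p := by
  unfold fsingle; split <;> simp [Finsupp.smul_single]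

/-- value of the Taylor differential on a basis face -/
noncomputable def Dval (i : ℕ) (s : Face ι (i+1)) : Face ι i →₀ MvPolynomial V k :=
  ∑ j ∈ s.1, fsingle i (s.1.erase j)
    (monomial (LL u s.1 - LL u (s.1.erase j)) (sgn k j s.1))

/-- the Taylor differential -/
noncomputable def D (i : ℕ) :
    (Face ι (i+1) →₀ MvPolynomial V k) →ₗ[MvPolynomial V k] (Face ι i →₀ MvPolynomial V k) :=
  Finsupp.linearCombination _ (Dval u i)

lemma D_single (i : ℕ) (s : Face ι (i+1)) (p : MvPolynomial V k) :
    D u i (Finsupp.single s p) = p • Dval u i s := by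
  rw [D, Finsupp.linearCombination_single]

lemma D_fsingle (i : ℕ) (t : Finset ι) (p : MvPolynomial V k) :
    D u i (fsingle (i+1) t p)
      = if h : t.card = i + 1 then p • Dval u i ⟨t, h⟩ else 0 := by
  unfold fsingle
  split
  · rw [D_single]
  · simp


/-- the set of generators dividing the monomial `α` -/
noncomputable def Dm (α : V →₀ ℕ) : Finset ι :=
  letI := Classical.decPred fun j : ι => u j ≤ α
  Finset.univ.filter (fun j => u j ≤ α)

lemma mem_Dm {α : V →₀ ℕ} {j : ι} : j ∈ Dm u α ↔ u j ≤ α := by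
  classical
  simp [Dm]

lemma subset_Dm {s : Finset ι} {β : V →₀ ℕ} : s ⊆ Dm u (β + LL u s) := by
  intro j hj
  rw [mem_Dm]
  exact le_trans (le_LL u hj) le_add_self

/-- the value of the contracting homotopy on a monomial basis element -/
noncomputable def Hval (i : ℕ) (s : Face ι i) (β : V →₀ ℕ) :
    Face ι (i+1) →₀ MvPolynomial V k :=
  if h : (Dm u (β + LL u s.1)).Nonempty then
    (if (Dm u (β + LL u s.1)).min' h ∈ s.1 then 0
     else fsingle (i+1) (insert ((Dm u (β + LL u s.1)).min' h) s.1)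
       (monomial ((β + LL u s.1) - LL u (insert ((Dm u (β + LL u s.1)).min' h) s.1)) 1))
  else 0

/-- the contracting homotopy, as a `k`-linear map -/
noncomputable def Hmap (i : ℕ) :
    (Face ι i →₀ MvPolynomial V k) →ₗ[k] (Face ι (i+1) →₀ MvPolynomial V k) :=
  Finsupp.lsum k (fun s => (basisMonomials V k).constr k (fun β => Hval u i s β))

lemma Hmap_single (i : ℕ) (s : Face ι i) (β : V →₀ ℕ) (c : k) :
    Hmap u i (Finsupp.single s (monomial β c)) = c • Hval u i s β := by
  rw [Hmap, Finsupp.lsum_single]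
  have : (monomial β c : MvPolynomial V k) = c • monomial β 1 := by
    rw [smul_monomial, smul_eq_mul, mul_one]
  rw [this, map_smul]
  congr 1
  have hb : (monomial β 1 : MvPolynomial V k) = basisMonomials V k β := by
    rw [coe_basisMonomials]
  rw [hb, Module.Basis.constr_basis]

lemma Hmap_fsingle (i : ℕ) (t : Finset ι) (β : V →₀ ℕ) (c : k) :
    Hmap u i (fsingle i t (monomial β c))
      = if h : t.card = i then c • Hval u i ⟨t, h⟩ β else 0 := by
  unfold fsingle
  split
  · rw [Hmap_single]
  · simp


lemma idx_erase_of_gt {j j' : ι} {s : Finset ι} (h : j' < j) :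
    idx j' (s.erase j) = idx j' s := by
  unfold idx
  rw [Finset.filter_erase, Finset.erase_eq_of_notMem]
  simp only [Finset.mem_filter]
  rintro ⟨-, hj⟩
  exact absurd (lt_trans hj h) (lt_irrefl j)

lemma idx_erase_of_lt {j j' : ι} {s : Finset ι} (h : j' < j) (hj' : j' ∈ s) :
    idx j (s.erase j') = idx j s - 1 ∧ 1 ≤ idx j s := by
  have hmem : j' ∈ s.filter (· < j) := Finset.mem_filter.mpr ⟨hj', h⟩
  constructor
  · unfold idx
    rw [Finset.filter_erase, Finset.card_erase_of_mem hmem]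
  · exact Finset.card_pos.mpr ⟨j', hmem⟩

lemma sgn_mul_sgn_erase {j j' : ι} {s : Finset ι} (hj : j ∈ s) (hj' : j' ∈ s)
    (hne : j' ≠ j) :
    sgn k j s * sgn k j' (s.erase j) + sgn k j' s * sgn k j (s.erase j') = 0 := by
  have key : ∀ a b : ι, a ∈ s → b ∈ s → b < a →
      sgn k a s * sgn k b (s.erase a) + sgn k b s * sgn k a (s.erase b) = 0 := by
    intro a b _ hb hba
    obtain ⟨h1, h2⟩ := idx_erase_of_lt (s := s) hba hb
    obtain ⟨m, hm⟩ := Nat.exists_eq_add_of_le h2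
    rw [Nat.add_comm] at hm
    unfold sgn
    rw [idx_erase_of_gt hba, h1, hm]
    simp [pow_succ]
    ring
  rcases lt_or_gt_of_ne hne with h | h
  · exact key j j' hj hj' h
  · rw [add_comm]; exact key j' j hj' hj h

lemma LL_erase_erase_le {j j' : ι} {s : Finset ι} :
    LL u ((s.erase j).erase j') ≤ LL u (s.erase j) := LL_erase_le u

lemma D_comp_D (i : ℕ) :
    (D u i).comp (D u (i+1)) = (0 : (Face ι (i+2) →₀ MvPolynomial V k) →ₗ[MvPolynomial V k] _) := by
  refine Finsupp.lhom_ext' fun s => LinearMap.ext_ring ?_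
  simp only [LinearMap.comp_apply, Finsupp.lsingle_apply, LinearMap.zero_apply]
  rw [D_single, one_smul, Dval, map_sum]
  have hterm : ∀ j ∈ s.1, D u i (fsingle (i+1) (s.1.erase j)
      (monomial (LL u s.1 - LL u (s.1.erase j)) (sgn k j s.1)))
      = ∑ j' ∈ s.1.erase j, fsingle i ((s.1.erase j).erase j')
          (monomial (LL u s.1 - LL u ((s.1.erase j).erase j'))
            (sgn k j s.1 * sgn k j' (s.1.erase j))) := by
    intro j hj
    have hc : (s.1.erase j).card = i + 1 := by
      rw [Finset.card_erase_of_mem hj, s.2]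
      omega
    rw [D_fsingle, dif_pos hc, Dval, Finset.smul_sum]
    refine Finset.sum_congr rfl fun j' hj' => ?_
    show (monomial (LL u s.1 - LL u (s.1.erase j)) (sgn k j s.1))
        • fsingle i ((s.1.erase j).erase j')
          (monomial (LL u (s.1.erase j) - LL u ((s.1.erase j).erase j'))
            (sgn k j' (s.1.erase j))) = _
    rw [← fsingle_smul, monomial_mul,
      tsub_add_tsub_cancel (LL_erase_le u) (LL_erase_erase_le u)]
  rw [Finset.sum_congr rfl hterm]
  rw [Finset.sum_sigma' s.1 (fun j => s.1.erase j)
    (fun j j' => fsingle i ((s.1.erase j).erase j')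
      (monomial (LL u s.1 - LL u ((s.1.erase j).erase j'))
        (sgn k j s.1 * sgn k j' (s.1.erase j))))]
  refine Finset.sum_involution (fun p _ => ⟨p.2, p.1⟩) ?_ ?_ ?_ ?_
  · rintro ⟨j, j'⟩ hp
    simp only [Finset.mem_sigma] at hp
    obtain ⟨hj, hj'⟩ := hp
    have hne : j' ≠ j := Finset.ne_of_mem_erase hj'
    have hj's : j' ∈ s.1 := Finset.mem_of_mem_erase hj'
    have hcomm : (s.1.erase j').erase j = (s.1.erase j).erase j' :=
      Finset.erase_right_comm
    simp only [hcomm]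
    rw [← fsingle_add, ← map_add, sgn_mul_sgn_erase hj hj's hne]
    simp only [map_zero]
    unfold fsingle
    split <;> simp
  · rintro ⟨j, j'⟩ hp hne0
    simp only [Finset.mem_sigma] at hp
    have hne : j' ≠ j := Finset.ne_of_mem_erase hp.2
    intro hEq
    exact hne (congrArg Sigma.fst hEq)
  · rintro ⟨j, j'⟩ hp
    simp only [Finset.mem_sigma] at hp ⊢
    exact ⟨Finset.mem_of_mem_erase hp.2,
      Finset.mem_erase.mpr ⟨(Finset.ne_of_mem_erase hp.2).symm, hp.1⟩⟩
  · rintro ⟨j, j'⟩ hp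
    rfl


lemma fsingle_zero {i : ℕ} {t : Finset ι} :
    fsingle i t (0 : MvPolynomial V k) = 0 := by
  unfold fsingle; split <;> simp

lemma fsingle_neg {i : ℕ} {t : Finset ι} (p : MvPolynomial V k) :
    fsingle i t (-p) = - fsingle i t p := by
  unfold fsingle; split <;> simp

lemma sgn_min {t : Finset ι} {m : ι} (h : ∀ x ∈ t, m ≤ x) : sgn k m t = 1 := by
  unfold sgn idx
  rw [Finset.filter_eq_empty_iff.mpr (fun {x} hx => not_lt.mpr (h x hx))]
  simp

lemma sgn_insert {s : Finset ι} {m j : ι} (hm : m ∉ s) (hj : j ∈ s) (hmj : m < j) :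
    sgn k j (insert m s) = - sgn k j s := by
  unfold sgn idx
  rw [Finset.filter_insert, if_pos hmj, Finset.card_insert_of_notMem
    (fun hc => hm (Finset.mem_of_mem_filter m hc))]
  rw [pow_succ, mul_comm, neg_one_mul]

lemma Hval_eq {i : ℕ} (s : Face ι i) {β α : V →₀ ℕ} (hα : β + LL u s.1 = α)
    (h : (Dm u α).Nonempty) :
    Hval (k := k) u i s β = if (Dm u α).min' h ∈ s.1 then 0
      else fsingle (i+1) (insert ((Dm u α).min' h) s.1)
        (monomial (α - LL u (insert ((Dm u α).min' h) s.1)) (1 : k)) := by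
  subst hα
  unfold Hval
  rw [dif_pos h]

lemma homotopy_basis (i : ℕ) (s : Face ι (i+1)) (β : V →₀ ℕ) :
    D u (i+1) (Hmap u (i+1) (Finsupp.single s (monomial β (1 : k))))
      + Hmap u i (D u i (Finsupp.single s (monomial β (1 : k))))
      = Finsupp.single s (monomial β (1 : k)) := by
  have hsne : s.1.Nonempty := Finset.card_pos.mp (by rw [s.2]; omega)
  have hDne : (Dm u (β + LL u s.1)).Nonempty :=
    ⟨hsne.choose, subset_Dm u hsne.choose_spec⟩
  set α := β + LL u s.1 with hαdef
  set m := (Dm u α).min' hDne with hmdef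
  have hm_le : ∀ x ∈ Dm u α, m ≤ x := fun x hx => Finset.min'_le _ _ hx
  have hm_le_s : ∀ x ∈ s.1, m ≤ x := fun x hx => hm_le x (subset_Dm u hx)
  have hum : u m ≤ α := (mem_Dm u).mp (Finset.min'_mem _ _)
  have hLLs_le : LL u s.1 ≤ α := le_add_self
  -- compute the H-part of the first term
  have hH1 : Hmap u (i+1) (Finsupp.single s (monomial β (1 : k))) = Hval u (i+1) s β := by
    rw [Hmap_single, one_smul]
  -- compute D applied to the single
  have hD : D u i (Finsupp.single s (monomial β (1 : k)))
      = ∑ j ∈ s.1, fsingle i (s.1.erase j)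
          (monomial (β + (LL u s.1 - LL u (s.1.erase j))) (sgn k j s.1)) := by
    rw [D_single, Dval, Finset.smul_sum]
    refine Finset.sum_congr rfl fun j hj => ?_
    rw [← fsingle_smul, monomial_mul, one_mul]
  have hcard_erase : ∀ j ∈ s.1, (s.1.erase j).card = i := by
    intro j hj; rw [Finset.card_erase_of_mem hj, s.2]; omega
  have hstrand : ∀ j ∈ s.1,
      (β + (LL u s.1 - LL u (s.1.erase j))) + LL u (s.1.erase j) = α := by
    intro j hj
    rw [add_assoc, tsub_add_cancel_of_le (LL_erase_le u)]
  -- compute the second term, summand by summand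
  have hterm2 : ∀ j ∈ s.1, Hmap u i (fsingle i (s.1.erase j)
        (monomial (β + (LL u s.1 - LL u (s.1.erase j))) (sgn k j s.1)))
      = (sgn k j s.1) • (if m ∈ s.1.erase j then 0
          else fsingle (i+1) (insert m (s.1.erase j))
            (monomial (α - LL u (insert m (s.1.erase j))) (1 : k))) := by
    intro j hj
    rw [Hmap_fsingle, dif_pos (hcard_erase j hj)]
    congr 1
    exact Hval_eq u ⟨s.1.erase j, hcard_erase j hj⟩ (hstrand j hj) hDne
  by_cases hms : m ∈ s.1
  · -- the minimal element is a vertex of the face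
    rw [hH1, Hval_eq u s hαdef.symm hDne]
    rw [if_pos (show (Dm u α).min' hDne ∈ s.1 from hms), map_zero, zero_add]
    rw [hD, map_sum, Finset.sum_congr rfl hterm2]
    rw [Finset.sum_eq_single_of_mem m hms (fun j hj hjm => by
      rw [if_pos (Finset.mem_erase.mpr ⟨(Ne.symm hjm), hms⟩), smul_zero])]
    rw [if_neg (Finset.notMem_erase m s.1), sgn_min hm_le_s, one_smul,
      Finset.insert_erase hms, hαdef, add_tsub_cancel_right, fsingle_of_card s.2]
  · -- the minimal element is a new vertex
    have hcins : (insert m s.1).card = i + 2 := by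
      rw [Finset.card_insert_of_notMem hms, s.2]
    have hLLins_le : LL u (insert m s.1) ≤ α := by
      rw [LL, Finset.sup_insert]
      exact sup_le hum hLLs_le
    have hmlt : ∀ j ∈ s.1, m < j := fun j hj =>
      lt_of_le_of_ne (hm_le_s j hj) (fun h => hms (h ▸ hj))
    -- first term
    rw [hH1, Hval_eq u s hαdef.symm hDne]
    rw [if_neg (show ¬ (Dm u α).min' hDne ∈ s.1 from hms)]
    rw [fsingle_of_card hcins, D_single]
    have hsum1 : ∀ j' ∈ insert m s.1,
        (monomial (α - LL u (insert m s.1)) (1:k)) • fsingle (i+1) ((insert m s.1).erase j')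
          (monomial (LL u (insert m s.1) - LL u ((insert m s.1).erase j'))
            (sgn k j' (insert m s.1)))
        = fsingle (i+1) ((insert m s.1).erase j')
            (monomial (α - LL u ((insert m s.1).erase j')) (sgn k j' (insert m s.1))) := by
      intro j' hj'
      rw [← fsingle_smul, monomial_mul, one_mul,
        tsub_add_tsub_cancel hLLins_le (LL_erase_le u)]
    have hins_eq : ∀ x ∈ insert m s.1, m ≤ x := by
      intro x hx
      rcases Finset.mem_insert.mp hx with h | h
      · exact h.ge
      · exact hm_le_s x h
    rw [show (Dval u (i+1) ⟨insert m s.1, hcins⟩ : Face ι (i+1) →₀ MvPolynomial V k)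
        = ∑ j' ∈ insert m s.1, fsingle (i+1) ((insert m s.1).erase j')
          (monomial (LL u (insert m s.1) - LL u ((insert m s.1).erase j'))
            (sgn k j' (insert m s.1))) from rfl]
    rw [Finset.smul_sum, Finset.sum_congr rfl hsum1, Finset.sum_insert hms]
    rw [Finset.erase_insert hms, sgn_min hins_eq, hαdef, add_tsub_cancel_right,
      fsingle_of_card s.2]
    -- second term
    rw [hD, map_sum, Finset.sum_congr rfl hterm2]
    have hterm2' : ∀ j ∈ s.1, (sgn k j s.1) • (if m ∈ s.1.erase j then 0
          else fsingle (i+1) (insert m (s.1.erase j))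
            (monomial (α - LL u (insert m (s.1.erase j))) (1 : k)))
        = fsingle (i+1) (insert m (s.1.erase j))
            (monomial (α - LL u (insert m (s.1.erase j))) (sgn k j s.1)) := by
      intro j hj
      rw [if_neg (fun h => hms (Finset.mem_of_mem_erase h)), ← fsingle_smul',
        smul_monomial, smul_eq_mul, mul_one]
    rw [Finset.sum_congr rfl hterm2']
    have hterm1' : ∀ j ∈ s.1,
        fsingle (i+1) ((insert m s.1).erase j)
            (monomial (α - LL u ((insert m s.1).erase j)) (sgn k j (insert m s.1)))
        = - fsingle (i+1) (insert m (s.1.erase j))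
            (monomial (α - LL u (insert m (s.1.erase j))) (sgn k j s.1)) := by
      intro j hj
      have hjm : j ≠ m := fun h => hms (by rwa [h] at hj)
      rw [Finset.erase_insert_of_ne (Ne.symm hjm),
        sgn_insert hms hj (hmlt j hj), map_neg, fsingle_neg]
    rw [Finset.sum_congr rfl hterm1', add_assoc, ← Finset.sum_add_distrib]
    simp only [neg_add_cancel, Finset.sum_const_zero, add_zero]


lemma homotopy (i : ℕ) :
    ((D u (i+1)).restrictScalars k).comp (Hmap u (i+1))
      + (Hmap u i).comp ((D u i).restrictScalars k)
      = LinearMap.id := by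
  refine Finsupp.lhom_ext' fun s => ?_
  refine Module.Basis.ext (basisMonomials V k) fun β => ?_
  simp only [LinearMap.comp_apply, Finsupp.lsingle_apply, LinearMap.add_apply,
    LinearMap.id_apply, LinearMap.restrictScalars_apply, coe_basisMonomials]
  exact homotopy_basis u i s β

lemma range_D_eq_ker (i : ℕ) :
    LinearMap.range (D u (i+1)) = LinearMap.ker (D (k := k) (V := V) u i) := by
  apply le_antisymm
  · rintro _ ⟨y, rfl⟩
    rw [LinearMap.mem_ker, ← LinearMap.comp_apply, D_comp_D, LinearMap.zero_apply]
  · intro z hz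
    rw [LinearMap.mem_ker] at hz
    refine ⟨Hmap u (i+1) z, ?_⟩
    have hid := LinearMap.congr_fun (homotopy u i) z
    simp only [LinearMap.comp_apply, LinearMap.add_apply, LinearMap.id_apply,
      LinearMap.restrictScalars_apply] at hid
    rw [hz, map_zero, add_zero] at hid
    exact hid

lemma D_minimal (hu : ∀ (j : ι) (s : Finset ι), j ∉ s → ¬ u j ≤ LL u s)
    (i : ℕ) (b : Face ι (i+1)) (a : Face ι i) :
    constantCoeff ((D u i (Finsupp.single b (1 : MvPolynomial V k))) a) = 0 := by
  classical
  rw [D_single, one_smul, Dval, Finsupp.finset_sum_apply, map_sum]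
  refine Finset.sum_eq_zero fun j hj => ?_
  have hc : (b.1.erase j).card = i := by
    rw [Finset.card_erase_of_mem hj, b.2]; omega
  rw [fsingle_of_card hc, Finsupp.single_apply]
  have hne : LL u b.1 - LL u (b.1.erase j) ≠ 0 := by
    intro h0
    have hle : LL u b.1 ≤ LL u (b.1.erase j) := tsub_eq_zero_iff_le.mp h0
    exact hu j (b.1.erase j) (Finset.notMem_erase j b.1)
      (le_trans (le_LL u hj) hle)
  split
  · rw [constantCoeff_monomial, if_neg hne]
  · rw [map_zero]

instance : Unique (Face ι 0) :=
  ⟨⟨⟨∅, Finset.card_empty⟩⟩, fun s => Subtype.ext (Finset.card_eq_zero.mp s.2)⟩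

/-- identify `G 0` with the polynomial ring -/
noncomputable def ρ : (Face ι 0 →₀ MvPolynomial V k) →ₗ[MvPolynomial V k] MvPolynomial V k :=
  Finsupp.lapply default

lemma ker_ρ : LinearMap.ker (ρ (k := k) (V := V) (ι := ι)) = ⊥ := by
  refine LinearMap.ker_eq_bot'.mpr fun y hy => ?_
  refine Finsupp.ext fun a => ?_
  rw [Unique.eq_default a, Finsupp.coe_zero, Pi.zero_apply]
  exact hy

lemma rho_Dval_singleton (j : ι) (h : ({j} : Finset ι).card = 1) :
    ρ (Dval u 0 ⟨{j}, h⟩) = monomial (u j) (1 : k) := by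
  have h1 : (Dval u 0 ⟨{j}, h⟩ : Face ι 0 →₀ MvPolynomial V k)
      = ∑ j' ∈ ({j} : Finset ι), fsingle 0 (({j} : Finset ι).erase j')
          (monomial (LL u {j} - LL u (({j} : Finset ι).erase j')) (sgn k j' {j})) := rfl
  rw [h1, Finset.sum_singleton, Finset.erase_singleton]
  have hL1 : LL u ({j} : Finset ι) = u j := Finset.sup_singleton
  have hL0 : LL u (∅ : Finset ι) = 0 := Finset.sup_empty
  have hsgn : sgn k j ({j} : Finset ι) = 1 := by
    unfold sgn idx
    rw [Finset.filter_singleton, if_neg (lt_irrefl j)]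
    simp
  rw [hL1, hL0, tsub_zero, hsgn, fsingle_of_card Finset.card_empty]
  have : (⟨∅, Finset.card_empty⟩ : Face ι 0) = default := Subsingleton.elim _ _
  rw [this, ρ, Finsupp.lapply_apply, Finsupp.single_eq_same]

lemma range_aug' :
    LinearMap.range ((ρ (k := k) (V := V)).comp (D u 0))
      = Ideal.span {p : MvPolynomial V k | ∃ j : ι, p = monomial (u j) 1} := by
  rw [LinearMap.range_comp, D, Finsupp.range_linearCombination, Submodule.map_span]
  congr 1
  ext p
  constructor
  · rintro ⟨q, ⟨s, rfl⟩, rfl⟩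
    obtain ⟨j, hj⟩ := Finset.card_eq_one.mp s.2
    have hs : s = ⟨{j}, by rw [Finset.card_singleton]⟩ := Subtype.ext hj
    rw [hs, rho_Dval_singleton u j]
    exact ⟨j, rfl⟩
  · rintro ⟨j, rfl⟩
    refine ⟨Dval u 0 ⟨{j}, Finset.card_singleton j⟩, ⟨⟨{j}, Finset.card_singleton j⟩, rfl⟩, ?_⟩
    rw [rho_Dval_singleton u j]


lemma LL_apply_le {s : Finset ι} {v : V} {N : ℕ}
    (h : ∀ i ∈ s, u i v ≤ N) : (LL u s) v ≤ N := by
  classical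
  induction s using Finset.induction_on with
  | empty =>
    show (⊥ : V →₀ ℕ) v ≤ N
    simp [Finsupp.bot_eq_zero]
  | @insert a t hx ih =>
    rw [LL, Finset.sup_insert, Finsupp.sup_apply]
    exact max_le (h a (Finset.mem_insert_self a t))
      (ih fun i hi => h i (Finset.mem_insert_of_mem hi))


/-- The Taylor complex as a minimal free resolution datum. -/
noncomputable def taylorRes (hu : ∀ (j : ι) (s : Finset ι), j ∉ s → ¬ u j ≤ LL u s)
    (I : Ideal (MvPolynomial V k))
    (hI : I = Ideal.span {p : MvPolynomial V k | ∃ j : ι, p = monomial (u j) 1}) :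
    Res k V I where
  κ i := Face ι (i+1)
  ft i := inferInstance
  dec i := inferInstance
  aug := ρ.comp (D u 0)
  d i := D u (i+1)
  range_aug := by rw [range_aug' u]; exact hI.symm
  exact_zero := by
    rw [LinearMap.ker_comp, ker_ρ, Submodule.comap_bot]
    exact range_D_eq_ker u 0
  exact_succ i := range_D_eq_ker u (i+1)
  minimal i b a := D_minimal u hu (i+1) b a

end Taylor


end PdCycleAux

/-- Theorem 4.1 of Zhu–Wang–et al., used as Lemma 3.3.
Let `D = (V(D), E(D), w)` be a vertex-weighted oriented cycle such that `w(x) ≥ 2`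
for every vertex `x ∈ V(D)`.  Then `pd (I(D)) = |E(D)| − 1`. -/
theorem pd_edgeIdeal_orientedCycle {k V : Type*} [Field k] [Fintype V]
    (D : VWOrientedGraph V) (hD : D.IsOrientedCycle)
    (hw : ∀ v : V, 2 ≤ D.w v)
    (R : MinimalGradedFreeResolution (D.edgeIdeal k)) :
    R.pd = D.edgeCount - 1 := by
  classical
  obtain ⟨n, hn3, c, hc⟩ := hD
  haveI : NeZero n := ⟨by omega⟩
  haveI : Fact (1 < n) := ⟨by omega⟩
  set em : Fin n → ZMod n := fun j => ((j : ℕ) : ZMod n) with hem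
  have hem_inj : Function.Injective em := by
    intro a b h
    have h2 : ((a : ℕ) : ZMod n).val = ((b : ℕ) : ZMod n).val := congrArg ZMod.val h
    rwa [ZMod.val_natCast_of_lt a.isLt, ZMod.val_natCast_of_lt b.isLt, ← Fin.ext_iff] at h2
  have hem_surj : Function.Surjective em := by
    intro t
    exact ⟨⟨t.val, t.val_lt⟩, ZMod.natCast_rightInverse t⟩
  set u : Fin n → (V →₀ ℕ) := fun j =>
    Finsupp.single (c (em j)) 1 + Finsupp.single (c (em j + 1)) (D.w (c (em j + 1)))
    with hu_def
  have hcne : ∀ t : ZMod n, c t ≠ c (t + 1) := by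
    intro t h
    have h1 := c.injective h
    have h2 : (1 : ZMod n) = 0 := left_eq_add.mp h1
    exact one_ne_zero h2
  have hadd_inj : ∀ t t' : ZMod n, t + 1 = t' + 1 → t = t' := fun t t' h => by
    have := congrArg (fun x => x - 1) h
    simpa using this
  have hujv : ∀ j : Fin n, u j (c (em j + 1)) = D.w (c (em j + 1)) := by
    intro j
    rw [hu_def]
    simp only [Finsupp.add_apply, Finsupp.single_eq_same]
    rw [Finsupp.single_apply, if_neg (fun h => hcne (em j) h), zero_add]
  have huiv : ∀ i j : Fin n, i ≠ j → u i (c (em j + 1)) ≤ 1 := by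
    intro i j hne
    rw [hu_def]
    simp only [Finsupp.add_apply]
    have h2 : Finsupp.single (c (em i + 1)) (D.w (c (em i + 1))) (c (em j + 1)) = 0 := by
      rw [Finsupp.single_apply, if_neg]
      intro h
      exact hne (hem_inj (hadd_inj _ _ (c.injective h)))
    rw [h2, add_zero, Finsupp.single_apply]
    split <;> omega
  have hu : ∀ (j : Fin n) (s : Finset (Fin n)), j ∉ s → ¬ u j ≤ PdCycleAux.LL u s := by
    intro j s hjs hle
    have h1 : u j (c (em j + 1)) ≤ (PdCycleAux.LL u s) (c (em j + 1)) := hle _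
    have h2 : (PdCycleAux.LL u s) (c (em j + 1)) ≤ 1 :=
      PdCycleAux.LL_apply_le u (fun i hi => huiv i j (fun h => hjs (h ▸ hi)))
    rw [hujv j] at h1
    have h3 := hw (c (em j + 1))
    omega
  -- the edge ideal is generated by the monomials `x^{u j}`
  have hmono : ∀ (a b : V) (e : ℕ), (X a * X b ^ e : MvPolynomial V k)
      = monomial (Finsupp.single a 1 + Finsupp.single b e) 1 := by
    intro a b e
    rw [X_pow_eq_monomial, X, monomial_mul, one_mul]
  have hI : D.edgeIdeal k = Ideal.span
      {p : MvPolynomial V k | ∃ j : Fin n, p = monomial (u j) 1} := by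
    rw [VWOrientedGraph.edgeIdeal]
    congr 1
    ext p
    constructor
    · rintro ⟨a, b, hab, rfl⟩
      obtain ⟨t, rfl, rfl⟩ := (hc a b).mp hab
      obtain ⟨j, rfl⟩ := hem_surj t
      exact ⟨j, hmono _ _ _⟩
    · rintro ⟨j, rfl⟩
      exact ⟨c (em j), c (em j + 1), (hc _ _).mpr ⟨em j, rfl, rfl⟩, (hmono _ _ _).symm⟩
  -- the two resolutions
  let A : PdCycleAux.Res k V (D.edgeIdeal k) :=
    { κ := fun i => Fin (R.rk i)
      ft := fun i => inferInstance
      dec := fun i => inferInstance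
      aug := R.aug
      d := R.d
      range_aug := R.range_aug
      exact_zero := R.exact_zero
      exact_succ := R.exact_succ
      minimal := R.minimal }
  let B : PdCycleAux.Res k V (D.edgeIdeal k) := PdCycleAux.taylorRes u hu _ hI
  have hcard := PdCycleAux.Res.card_eq A B
  have hrk : ∀ i, R.rk i = Fintype.card {s : Finset (Fin n) // s.card = i + 1} := by
    intro i
    have := hcard i
    rwa [Fintype.card_fin] at this
  have hrk_ne : ∀ i, R.rk i ≠ 0 ↔ i + 1 ≤ n := by
    intro i
    rw [hrk i]
    constructor
    · intro h
      obtain ⟨s⟩ := Fintype.card_pos_iff.mp (Nat.pos_of_ne_zero h)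
      calc i + 1 = s.1.card := s.2.symm
        _ ≤ Fintype.card (Fin n) := Finset.card_le_univ s.1
        _ = n := Fintype.card_fin n
    · intro h
      have hle : i + 1 ≤ (Finset.univ : Finset (Fin n)).card := by
        rwa [Finset.card_univ, Fintype.card_fin]
      obtain ⟨t, -, ht⟩ := Finset.exists_subset_card_eq hle
      exact (Fintype.card_pos_iff.mpr ⟨⟨t, ht⟩⟩).ne'
  -- identify the set of homological degrees with nonzero Betti numbers
  have hset : {i : ℕ | ∃ j, R.betti i j ≠ 0} = Set.Iic (n - 1) := by
    ext i
    simp only [Set.mem_setOf_eq, Set.mem_Iic]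
    constructor
    · rintro ⟨j, hβ⟩
      rw [MinimalGradedFreeResolution.betti] at hβ
      obtain ⟨⟨a, -⟩⟩ := (Nat.card_ne_zero.mp hβ).1
      have hrki : R.rk i ≠ 0 := a.pos.ne'
      have := (hrk_ne i).mp hrki
      omega
    · intro hi
      have hne : R.rk i ≠ 0 := (hrk_ne i).mpr (by omega)
      have hpos : 0 < R.rk i := Nat.pos_of_ne_zero hne
      refine ⟨R.deg i ⟨0, hpos⟩, ?_⟩
      rw [MinimalGradedFreeResolution.betti]
      rw [Nat.card_ne_zero]
      exact ⟨⟨⟨⟨0, hpos⟩, rfl⟩⟩, inferInstance⟩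
  have hpd : R.pd = n - 1 := by
    rw [MinimalGradedFreeResolution.pd, hset]
    exact isGreatest_Iic.csSup_eq
  -- the number of edges is `n`
  have hec : D.edgeCount = n := by
    rw [VWOrientedGraph.edgeCount]
    have hbij : Function.Bijective
        (fun t : ZMod n => (⟨(c t, c (t + 1)), (hc _ _).mpr ⟨t, rfl, rfl⟩⟩ :
          {p : V × V // D.edge p.1 p.2})) := by
      constructor
      · intro t t' h
        have h1 : c t = c t' := congrArg (fun x => x.1.1) h
        exact c.injective h1
      · rintro ⟨⟨a, b⟩, hab⟩
        obtain ⟨t, rfl, rfl⟩ := (hc a b).mp hab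
        exact ⟨t, rfl⟩
    have := Nat.card_eq_of_bijective _ hbij
    rw [← this, Nat.card_eq_fintype_card, ZMod.card]
  rw [hpd, hec]
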